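/- Let D be a finite set, γ: D → ℝ^d with image spanning ℝ^d, and λ₁,…,λₙ ∈ ℝ^d such that the differences {λᵢ − λ₁ : 2 ≤ i ≤ n} span ℝ^d. Suppose g, f satisfy: for all x ∈ D and all i, exp(⟨g(γ(x)), f(λᵢ)⟩)/∑ⱼ exp(⟨g(γ(x)), f(λⱼ)⟩) = exp(⟨γ(x), λᵢ⟩)/∑ⱼ exp(⟨γ(x), λⱼ⟩), and the transformed difference vectors {f(λᵢ) − f(λ₁)} also span ℝ^d. Then there exist a unique A ∈ GL(d, ℝ) and a unique c ∈ ℝ^d with g(γ(x)) = A⁻ᵀ γ(x) for all x ∈ D and f(λᵢ) = A λᵢ + c for all i. -/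

import Mathlib

open Matrix

/-- Dot product with a fixed vector, as a linear map. -/
noncomputable def dotL {d : ℕ} (a : Fin d → ℝ) : (Fin d → ℝ) →ₗ[ℝ] ℝ where
  toFun w := a ⬝ᵥ w
  map_add' x y := by simp [dotProduct_add]
  map_smul' r x := by simp [dotProduct_smul]

@[simp] lemma dotL_apply {d : ℕ} (a w : Fin d → ℝ) : dotL a w = a ⬝ᵥ w := rfl

/-- If two vectors have equal dot products against a spanning set, they are equal. -/
lemma eq_of_dot_span {d : ℕ} {s : Set (Fin d → ℝ)}
    (hs : Submodule.span ℝ s = ⊤) {a b : Fin d → ℝ}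
    (h : ∀ y ∈ s, y ⬝ᵥ a = y ⬝ᵥ b) : a = b := by
  have hall : ∀ y : Fin d → ℝ, y ⬝ᵥ a = y ⬝ᵥ b := by
    intro y
    have hy : y ∈ Submodule.span ℝ s := by rw [hs]; trivial
    induction hy using Submodule.span_induction with
    | mem z hz => exact h z hz
    | zero => simp
    | add z w _ _ hz hw => simp [add_dotProduct, hz, hw]
    | smul r z _ hz => simp [smul_dotProduct, hz]
  have hz : (a - b) ⬝ᵥ (a - b) = 0 := by
    simp [dotProduct_sub, hall (a - b)]
  exact sub_eq_zero.mp ((dotProduct_self_eq_zero (v := a - b)).1 hz)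

/-- Two matrices whose `mulVec` agree on a spanning set are equal. -/
lemma matrix_eq_of_span {d : ℕ} {s : Set (Fin d → ℝ)}
    (hs : Submodule.span ℝ s = ⊤) {A B : Matrix (Fin d) (Fin d) ℝ}
    (h : ∀ y ∈ s, A.mulVec y = B.mulVec y) : A = B := by
  have hall : ∀ y : Fin d → ℝ, A.mulVec y = B.mulVec y := by
    intro y
    have hy : y ∈ Submodule.span ℝ s := by rw [hs]; trivial
    induction hy using Submodule.span_induction with
    | mem z hz => exact h z hz
    | zero => simp
    | add z w _ _ hz hw => simp [mulVec_add, hz, hw]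
    | smul r z _ hz => simp [mulVec_smul, hz]
  ext i j
  have := congrFun (hall (Pi.single j 1)) i
  simpa using this

/-- Softmax-head equivalence: equal softmax probabilities force the hidden
states and readouts to be related by a unique invertible linear map together
with a unique common shift `c` on the readout vectors. -/
theorem stmt3 {d n : ℕ} [NeZero n] {D : Type*} [Fintype D]
    (γ : D → (Fin d → ℝ)) (lam : Fin n → (Fin d → ℝ))
    (hγ : Submodule.span ℝ (Set.range γ) = ⊤)
    (hdiff : Submodule.span ℝ (Set.range fun i : Fin n => lam i - lam 0) = ⊤)
    (g f : (Fin d → ℝ) → (Fin d → ℝ))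
    (hsm : ∀ (x : D) (i : Fin n),
      Real.exp (g (γ x) ⬝ᵥ f (lam i)) / ∑ j, Real.exp (g (γ x) ⬝ᵥ f (lam j))
        = Real.exp (γ x ⬝ᵥ lam i) / ∑ j, Real.exp (γ x ⬝ᵥ lam j))
    (hdiff' : Submodule.span ℝ
        (Set.range fun i : Fin n => f (lam i) - f (lam 0)) = ⊤) :
    ∃! p : Matrix (Fin d) (Fin d) ℝ × (Fin d → ℝ), IsUnit p.1.det ∧
      (∀ x : D, g (γ x) = (p.1⁻¹)ᵀ.mulVec (γ x)) ∧
      (∀ i : Fin n, f (lam i) = p.1.mulVec (lam i) + p.2) := by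
  classical
  set u : Fin n → (Fin d → ℝ) := fun i => f (lam i) - f (lam 0) with hu
  set v : Fin n → (Fin d → ℝ) := fun i => lam i - lam 0 with hv
  -- Step 1: the key dot-product identity
  have key : ∀ (x : D) (i : Fin n), g (γ x) ⬝ᵥ u i = γ x ⬝ᵥ v i := by
    intro x i
    have hS' : 0 < ∑ j, Real.exp (g (γ x) ⬝ᵥ f (lam j)) :=
      Finset.sum_pos (fun j _ => Real.exp_pos _) ⟨0, Finset.mem_univ 0⟩
    have hS : 0 < ∑ j, Real.exp (γ x ⬝ᵥ lam j) :=
      Finset.sum_pos (fun j _ => Real.exp_pos _) ⟨0, Finset.mem_univ 0⟩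
    have h1 := hsm x i
    have h2 := hsm x 0
    rw [div_eq_div_iff hS'.ne' hS.ne'] at h1 h2
    have hmul : Real.exp (g (γ x) ⬝ᵥ f (lam i)) * Real.exp (γ x ⬝ᵥ lam 0)
        = Real.exp (γ x ⬝ᵥ lam i) * Real.exp (g (γ x) ⬝ᵥ f (lam 0)) := by
      have h3 := congrArg (· * (Real.exp (γ x ⬝ᵥ lam 0) *
        (∑ j, Real.exp (g (γ x) ⬝ᵥ f (lam j))))) h1
      have h2' : Real.exp (γ x ⬝ᵥ lam 0) * (∑ j, Real.exp (g (γ x) ⬝ᵥ f (lam j)))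
          = Real.exp (g (γ x) ⬝ᵥ f (lam 0)) * (∑ j, Real.exp (γ x ⬝ᵥ lam j)) := by
        linarith [h2]
      have hpos : (0:ℝ) < (∑ j, Real.exp (γ x ⬝ᵥ lam j)) *
          (∑ j, Real.exp (g (γ x) ⬝ᵥ f (lam j))) := mul_pos hS hS'
      nlinarith [h1, h2, hS, hS', Real.exp_pos (g (γ x) ⬝ᵥ f (lam i)),
        Real.exp_pos (γ x ⬝ᵥ lam i), Real.exp_pos (g (γ x) ⬝ᵥ f (lam 0)),
        Real.exp_pos (γ x ⬝ᵥ lam 0)]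
    rw [← Real.exp_add, ← Real.exp_add] at hmul
    have := Real.exp_injective hmul
    simp only [hu, hv, dotProduct_sub]
    linarith
  -- Step 2: get a basis from the spanning family u
  obtain ⟨s, hsub, hspan, hli⟩ := exists_linearIndependent ℝ (Set.range u)
  rw [hdiff'] at hspan
  have hbspan : ⊤ ≤ Submodule.span ℝ (Set.range (Subtype.val : s → (Fin d → ℝ))) := by
    rw [Subtype.range_val, hspan]
  set b : Module.Basis s ℝ (Fin d → ℝ) := Module.Basis.mk hli hbspan with hbdef
  have hb : ∀ j : s, b j = (j : Fin d → ℝ) := fun j => Module.Basis.mk_apply hli hbspan j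
  -- for each basis element, pick an index
  have hidx : ∀ j : s, ∃ i : Fin n, u i = (j : Fin d → ℝ) := fun j => hsub j.2
  choose idx hidxu using hidx
  -- Step 3: the linear map T with T (u i) = v i
  set T : (Fin d → ℝ) →ₗ[ℝ] (Fin d → ℝ) := b.constr ℝ (fun j => v (idx j)) with hT
  have star : ∀ (x : D) (w : Fin d → ℝ), γ x ⬝ᵥ T w = g (γ x) ⬝ᵥ w := by
    intro x w
    have heq : (dotL (γ x)).comp T = dotL (g (γ x)) := by
      apply b.ext
      intro j
      simp only [LinearMap.comp_apply, dotL_apply, hT, Module.Basis.constr_basis]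
      rw [hb j, ← hidxu j]
      exact (key x (idx j)).symm
    have := LinearMap.congr_fun heq w
    simpa using this
  have hTu : ∀ i : Fin n, T (u i) = v i := by
    intro i
    apply eq_of_dot_span hγ
    rintro y ⟨x, rfl⟩
    rw [star x (u i), key x i]
  -- T is surjective, hence bijective
  have hsurj : Function.Surjective T := by
    rw [← LinearMap.range_eq_top]
    rw [← top_le_iff, ← hdiff]
    rw [Submodule.span_le]
    rintro y ⟨i, rfl⟩
    exact ⟨u i, hTu i⟩
  have hinj : Function.Injective T := LinearMap.injective_iff_surjective.2 hsurj
  set N : Matrix (Fin d) (Fin d) ℝ := LinearMap.toMatrix' T with hN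
  have hNmul : ∀ w, N.mulVec w = T w := by
    intro w
    have : Matrix.toLin' N w = T w := by rw [hN, Matrix.toLin'_toMatrix']
    rwa [Matrix.toLin'_apply] at this
  have hNdet : IsUnit N.det := by
    rw [hN, LinearMap.det_toMatrix']
    exact (LinearEquiv.ofBijective T ⟨hinj, hsurj⟩).isUnit_det'
  set A : Matrix (Fin d) (Fin d) ℝ := N⁻¹ with hA
  have hAdet : IsUnit A.det := N.isUnit_nonsing_inv_det hNdet
  have hAinv : A⁻¹ = N := by rw [hA, N.nonsing_inv_nonsing_inv hNdet]
  set c : Fin d → ℝ := f (lam 0) - A.mulVec (lam 0) with hc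
  -- g equation
  have hgeq : ∀ x : D, g (γ x) = (A⁻¹)ᵀ.mulVec (γ x) := by
    intro x
    rw [hAinv]
    funext j
    have := star x (Pi.single j 1)
    rw [← hNmul] at this
    rw [dotProduct_mulVec, ← Matrix.mulVec_transpose] at this
    simpa using this.symm
  -- f equation
  have hfeq : ∀ i : Fin n, f (lam i) = A.mulVec (lam i) + c := by
    intro i
    have h1 : A.mulVec (v i) = u i := by
      rw [← hTu i, ← hNmul, hA, mulVec_mulVec, N.nonsing_inv_mul hNdet, one_mulVec]
    have h2 : A.mulVec (v i) = A.mulVec (lam i) - A.mulVec (lam 0) := by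
      rw [hv]; simp [mulVec_sub]
    have : f (lam i) - f (lam 0) = A.mulVec (lam i) - A.mulVec (lam 0) := by
      rw [← h2, h1]
    rw [hc]
    abel_nf
    abel_nf at this
    linear_combination (norm := abel) this
  refine ⟨(A, c), ⟨hAdet, hgeq, hfeq⟩, ?_⟩
  rintro ⟨B, c'⟩ ⟨hBdet, hgB, hfB⟩
  dsimp only at hBdet hgB hfB
  have hBA : B = A := by
    apply matrix_eq_of_span hdiff
    rintro y ⟨i, rfl⟩
    have h1 : f (lam i) - f (lam 0) = B.mulVec (lam i - lam 0) := by
      rw [hfB i, hfB 0, mulVec_sub]; abel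
    have h2 : f (lam i) - f (lam 0) = A.mulVec (lam i - lam 0) := by
      rw [hfeq i, hfeq 0, mulVec_sub]; abel
    rw [← h1, h2]
  have hcc : c' = c := by
    have h1 := hfB 0
    have h2 := hfeq 0
    rw [hBA] at h1
    rw [h1] at h2
    exact (add_left_cancel h2.symm).symm
  rw [Prod.ext_iff]
  exact ⟨hBA, hcc⟩
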